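/- arXiv:0804.0738 — 3 statements merged into one kernel-verified Lean document; each statement's English description precedes it below -/
import Mathlib

section
/- For any real number q, the almost complex structure J defined by J X1 = X2, J X2 = -X1, J X3 = X4 - q X2, J X4 = -X3 - q X1 on the 4-dimensional Lie algebra with nonzero brackets [X2,X3] = -X1, [X4,X2] = X2, [X4,X3] = -X3 (the Inoue surface S^± Lie algebra) satisfies J^2 = -id and is integrable. -/
/-- For `q : ℝ`, the almost complex structure `J X₁ = X₂, J X₂ = -X₁,
`J X₃ = X₄ - qX₂, J X₄ = -X₃ - qX₁` on the Inoue surface `S^±` Lie algebra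
(brackets `⁅X₂,X₃⁆ = -X₁`, `⁅X₄,X₂⁆ = X₂`, `⁅X₄,X₃⁆ = -X₃`)
satisfies `J² = -id` and is integrable. -/
theorem inoue_Spm_complex_structure_integrable
    (q : ℝ)
    (g : Type*) [LieRing g] [LieAlgebra ℝ g] (b : Module.Basis (Fin 4) ℝ g)
    (h23 : ⁅b 1, b 2⁆ = -(b 0)) (h42 : ⁅b 3, b 1⁆ = b 1) (h43 : ⁅b 3, b 2⁆ = -(b 2))
    (h12 : ⁅b 0, b 1⁆ = 0) (h13 : ⁅b 0, b 2⁆ = 0) (h14 : ⁅b 0, b 3⁆ = 0)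
    (J : g →ₗ[ℝ] g)
    (hJ1 : J (b 0) = b 1) (hJ2 : J (b 1) = -(b 0))
    (hJ3 : J (b 2) = b 3 - q • b 1) (hJ4 : J (b 3) = -(b 2) - q • b 0) :
    (∀ X : g, J (J X) = -X) ∧
      ∀ X Y : g, ⁅J X, J Y⁆ - J ⁅J X, Y⁆ - J ⁅X, J Y⁆ - ⁅X, Y⁆ = 0 := by
  have h21 : ⁅b 1, b 0⁆ = 0 := by rw [← lie_skew (b 1) (b 0), h12, neg_zero]
  have h31 : ⁅b 2, b 0⁆ = 0 := by rw [← lie_skew (b 2) (b 0), h13, neg_zero]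
  have h41 : ⁅b 3, b 0⁆ = 0 := by rw [← lie_skew (b 3) (b 0), h14, neg_zero]
  have h32 : ⁅b 2, b 1⁆ = b 0 := by rw [← lie_skew (b 2) (b 1), h23, neg_neg]
  have h24 : ⁅b 1, b 3⁆ = -(b 1) := by rw [← lie_skew (b 1) (b 3), h42]
  have h34 : ⁅b 2, b 3⁆ = b 2 := by rw [← lie_skew (b 2) (b 3), h43, neg_neg]
  constructor
  · have : J ∘ₗ J = -LinearMap.id := by
      apply b.ext
      intro i
      fin_cases i <;>
        simp [hJ1, hJ2, hJ3, hJ4, map_sub, map_smul, map_neg]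
    intro X
    have := LinearMap.congr_fun this X
    simpa using this
  · let N : g →ₗ[ℝ] g →ₗ[ℝ] g :=
      LinearMap.mk₂ ℝ (fun X Y => ⁅J X, J Y⁆ - J ⁅J X, Y⁆ - J ⁅X, J Y⁆ - ⁅X, Y⁆)
        (by intro x y z; simp [add_lie, lie_add, map_add]; abel)
        (by intro c x y; simp [smul_lie, lie_smul, map_smul, smul_sub])
        (by intro x y z; simp [add_lie, lie_add, map_add]; abel)
        (by intro c x y; simp [smul_lie, lie_smul, map_smul, smul_sub])
    have hN : N = 0 := by
      apply b.ext
      intro i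
      apply b.ext
      intro j
      fin_cases i <;> fin_cases j <;>
        simp [N, hJ1, hJ2, hJ3, hJ4, h23, h42, h43, h12, h13, h14, h21, h31, h41,
          h32, h24, h34, lie_sub, sub_lie, lie_smul, smul_lie, lie_self,
          map_sub, map_smul, map_neg, smul_sub, smul_smul] <;> module
    intro X Y
    have := LinearMap.congr_fun (LinearMap.congr_fun hN X) Y
    simpa [N] using this
end

section
/- The Lie algebra g = span{X1,...,X_{2l}, X_{2l+1},...,X_{2l+2k}} with brackets [X_{2l+2i}, X_{2j-1}] = -X_{2j}, [X_{2l+2i}, X_{2j}] = X_{2j-1} (1 ≤ i ≤ k, 1 ≤ j ≤ l), all others zero, is a 2-step solvable unimodular Lie algebra whose adjoint operators ad(X) all have purely imaginary spectrum (i.e., ad(X)² has non-positive real eigenvalues); in particular trace(ad X) = 0 for all X. -/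
/-- The Lie algebra `g` of Example 3: basis `X₁,…,X_{2l}, X_{2l+1},…,X_{2l+2k}`
(here indexed by `(Fin l × Fin 2) ⊕ (Fin k × Fin 2)`, with `inl (j,0) = X_{2j-1}`,
`inl (j,1) = X_{2j}`, `inr (i,0) = X_{2l+2i-1}`, `inr (i,1) = X_{2l+2i}`) and
nonzero brackets `⁅X_{2l+2i}, X_{2j-1}⁆ = -X_{2j}`, `⁅X_{2l+2i}, X_{2j}⁆ = X_{2j-1}`,
is 2-step solvable, unimodular, and every `ad X` has purely imaginary spectrum:
every real eigenvalue of `(ad X)²` is non-positive. -/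
theorem rigid_type_solvable_unimodular
    (k l : ℕ) (hk : 1 ≤ k) (hl : 1 ≤ l)
    (g : Type*) [LieRing g] [LieAlgebra ℝ g] [Module.Finite ℝ g]
    (b : Module.Basis ((Fin l × Fin 2) ⊕ (Fin k × Fin 2)) ℝ g)
    (hnz1 : ∀ (i : Fin k) (j : Fin l),
      ⁅b (Sum.inr (i, 1)), b (Sum.inl (j, 0))⁆ = -(b (Sum.inl (j, 1))))
    (hnz2 : ∀ (i : Fin k) (j : Fin l),
      ⁅b (Sum.inr (i, 1)), b (Sum.inl (j, 1))⁆ = b (Sum.inl (j, 0)))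
    (hz1 : ∀ p q : Fin l × Fin 2, ⁅b (Sum.inl p), b (Sum.inl q)⁆ = 0)
    (hz2 : ∀ p q : Fin k × Fin 2, ⁅b (Sum.inr p), b (Sum.inr q)⁆ = 0)
    (hz3 : ∀ (i : Fin k) (p : Fin l × Fin 2),
      ⁅b (Sum.inr (i, 0)), b (Sum.inl p)⁆ = 0) :
    ((∀ X₁ X₂ X₃ X₄ : g, ⁅⁅X₁, X₂⁆, ⁅X₃, X₄⁆⁆ = 0) ∧
      (∀ X : g, LinearMap.trace ℝ g (LieAlgebra.ad ℝ g X) = 0) ∧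
      (∀ (X : g) (μ : ℝ),
        Module.End.HasEigenvalue ((LieAlgebra.ad ℝ g X) ^ 2) μ → μ ≤ 0)) := by
  classical
  have two : ∀ e : Fin 2, e = 0 ∨ e = 1 := by decide
  set S : Submodule ℝ g :=
    Submodule.span ℝ (Set.range fun p : Fin l × Fin 2 => b (Sum.inl p)) with hS
  have hbS : ∀ p, b (Sum.inl p) ∈ S := fun p => Submodule.subset_span ⟨p, rfl⟩
  -- brackets of basis vectors land in S
  have hbrS : ∀ m n, ⁅b m, b n⁆ ∈ S := by
    rintro (p | ⟨i, e⟩) (q | ⟨i', e'⟩)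
    · rw [hz1]; exact S.zero_mem
    · rw [← lie_skew]
      rcases two e' with rfl | rfl
      · rw [hz3]; simpa using S.zero_mem
      · rcases p with ⟨j, e⟩
        rcases two e with rfl | rfl
        · rw [hnz1]; exact S.neg_mem (S.neg_mem (hbS _))
        · rw [hnz2]; exact S.neg_mem (hbS _)
    · rcases two e with rfl | rfl
      · rw [hz3]; exact S.zero_mem
      · rcases q with ⟨j, e'⟩
        rcases two e' with rfl | rfl
        · rw [hnz1]; exact S.neg_mem (hbS _)
        · rw [hnz2]; exact hbS _
    · rw [hz2]; exact S.zero_mem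
  -- every bracket lands in S
  have hbr : ∀ x y : g, ⁅x, y⁆ ∈ S := by
    intro x y
    have hx := Module.Basis.mem_span b x
    have hy := Module.Basis.mem_span b y
    induction hx using Submodule.span_induction with
    | mem u hu =>
      obtain ⟨m, rfl⟩ := hu
      induction hy using Submodule.span_induction with
      | mem v hv => obtain ⟨n, rfl⟩ := hv; exact hbrS m n
      | zero => simp
      | add v w _ _ h1 h2 => rw [lie_add]; exact S.add_mem h1 h2
      | smul c v _ h1 => rw [lie_smul]; exact S.smul_mem _ h1
    | zero => simp
    | add u v _ _ h1 h2 => rw [add_lie]; exact S.add_mem h1 h2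
    | smul c u _ h1 => rw [smul_lie]; exact S.smul_mem _ h1
  -- brackets of two elements of S vanish
  have hSS : ∀ x ∈ S, ∀ y ∈ S, ⁅x, y⁆ = (0 : g) := by
    intro x hx y hy
    induction hx using Submodule.span_induction with
    | mem u hu =>
      obtain ⟨p, rfl⟩ := hu
      induction hy using Submodule.span_induction with
      | mem v hv => obtain ⟨q, rfl⟩ := hv; exact hz1 p q
      | zero => simp
      | add v w _ _ h1 h2 => rw [lie_add, h1, h2, add_zero]
      | smul c v _ h1 => rw [lie_smul, h1, smul_zero]
    | zero => simp
    | add u v _ _ h1 h2 => rw [add_lie, h1, h2, add_zero]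
    | smul c u _ h1 => rw [smul_lie, h1, smul_zero]
  -- expansion of ⁅x, y⁆ over the basis of x
  have expand : ∀ x y : g, ⁅x, y⁆ = ∑ m, b.repr x m • ⁅b m, y⁆ := by
    intro x y
    have h := map_sum (LieAlgebra.ad ℝ g y) (fun m => b.repr x m • b m) Finset.univ
    simp only [map_smul, LieAlgebra.ad_apply] at h
    rw [b.sum_repr x] at h
    rw [← lie_skew, h, ← Finset.sum_neg_distrib]
    refine Finset.sum_congr rfl fun m _ => ?_
    rw [← smul_neg, lie_skew]
  -- the key scalar
  set t : g → ℝ := fun x => ∑ i : Fin k, b.repr x (Sum.inr (i, 1)) with ht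
  have key0 : ∀ (x : g) (j : Fin l),
      ⁅x, b (Sum.inl (j, 0))⁆ = (-(t x)) • b (Sum.inl (j, 1)) := by
    intro x j
    rw [expand, Fintype.sum_sum_type]
    simp only [hz1, smul_zero, Finset.sum_const_zero, zero_add,
      Fintype.sum_prod_type, Fin.sum_univ_two, hz3, hnz1, smul_neg, ht]
    rw [Finset.sum_neg_distrib, neg_smul, Finset.sum_smul]
  have key1 : ∀ (x : g) (j : Fin l),
      ⁅x, b (Sum.inl (j, 1))⁆ = (t x) • b (Sum.inl (j, 0)) := by
    intro x j
    rw [expand, Fintype.sum_sum_type]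
    simp only [hz1, smul_zero, Finset.sum_const_zero, zero_add,
      Fintype.sum_prod_type, Fin.sum_univ_two, hz3, hnz2, zero_add, ht]
    rw [Finset.sum_smul]
  -- (ad x)^2 acts as -(t x)^2 on S
  have hAA : ∀ (x : g), ∀ s ∈ S, ⁅x, ⁅x, s⁆⁆ = (-(t x) ^ 2) • s := by
    intro x s hs
    induction hs using Submodule.span_induction with
    | mem u hu =>
      obtain ⟨⟨j, e⟩, rfl⟩ := hu
      rcases two e with rfl | rfl
      · show ⁅x, ⁅x, b (Sum.inl (j, 0))⁆⁆ = _
        rw [key0, lie_smul, key1, smul_smul]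
        ring_nf
      · show ⁅x, ⁅x, b (Sum.inl (j, 1))⁆⁆ = _
        rw [key1, lie_smul, key0, smul_smul]
        ring_nf
    | zero => simp
    | add u v _ _ h1 h2 => rw [lie_add, lie_add, h1, h2, smul_add]
    | smul c u _ h1 => rw [lie_smul, lie_smul, h1, smul_comm]
  -- coordinates of elements of S at inr indices vanish
  have hcoord : ∀ s ∈ S, ∀ q : Fin k × Fin 2, b.repr s (Sum.inr q) = 0 := by
    intro s hs q
    induction hs using Submodule.span_induction with
    | mem u hu => obtain ⟨p, rfl⟩ := hu; simp [Module.Basis.repr_self, Finsupp.single_apply]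
    | zero => simp
    | add u v _ _ h1 h2 => rw [map_add]; simp [h1, h2]
    | smul c u _ h1 => rw [map_smul]; simp [h1]
  -- membership in S from vanishing inr coordinates
  have hmem : ∀ v : g, (∀ q : Fin k × Fin 2, b.repr v (Sum.inr q) = 0) → v ∈ S := by
    intro v hv
    have hv' : v = ∑ p : Fin l × Fin 2, b.repr v (Sum.inl p) • b (Sum.inl p) := by
      conv_lhs => rw [← b.sum_repr v]
      rw [Fintype.sum_sum_type]
      simp [hv]
    rw [hv']
    exact Submodule.sum_mem _ fun p _ => Submodule.smul_mem _ _ (hbS p)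
  refine ⟨?_, ?_, ?_⟩
  · intro X₁ X₂ X₃ X₄
    exact hSS _ (hbr X₁ X₂) _ (hbr X₃ X₄)
  · intro X
    rw [LinearMap.trace_eq_matrix_trace ℝ b, Matrix.trace]
    apply Finset.sum_eq_zero
    rintro (⟨j, e⟩ | q) -
    · rcases two e with rfl | rfl
      · simp only [Matrix.diag_apply, LinearMap.toMatrix_apply, LieAlgebra.ad_apply]
        rw [key0]
        simp [Module.Basis.repr_self, Finsupp.single_apply]
      · simp only [Matrix.diag_apply, LinearMap.toMatrix_apply, LieAlgebra.ad_apply]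
        rw [key1]
        simp [Module.Basis.repr_self, Finsupp.single_apply]
    · simp only [Matrix.diag_apply, LinearMap.toMatrix_apply, LieAlgebra.ad_apply]
      exact hcoord _ (hbr X (b (Sum.inr q))) q
  · intro X μ hμ
    obtain ⟨v, hv⟩ := hμ.exists_hasEigenvector
    have hv0 : v ≠ 0 := hv.right
    have heq : ⁅X, ⁅X, v⁆⁆ = μ • v := by
      have := hv.apply_eq_smul
      simpa [pow_two, Module.End.mul_apply, LieAlgebra.ad_apply] using this
    by_cases hvS : ∀ q : Fin k × Fin 2, b.repr v (Sum.inr q) = 0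
    · have hvmem := hmem v hvS
      have h2 : (-(t X) ^ 2) • v = μ • v := by rw [← hAA X v hvmem, heq]
      have hμt : (-(t X) ^ 2) = μ := by
        have h3 : ((-(t X) ^ 2) - μ) • v = 0 := by rw [sub_smul, h2, sub_self]
        rcases smul_eq_zero.mp h3 with h | h
        · linarith [sub_eq_zero.mp h]
        · exact absurd h hv0
      rw [← hμt]
      simpa using sq_nonneg (t X)
    · push_neg at hvS
      obtain ⟨q, hq⟩ := hvS
      have h0 : b.repr ⁅X, ⁅X, v⁆⁆ (Sum.inr q) = 0 := hcoord _ (hbr X ⁅X, v⁆) q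
      rw [heq] at h0
      simp only [map_smul, Finsupp.smul_apply, smul_eq_mul] at h0
      rcases mul_eq_zero.mp h0 with h | h
      · exact h.le
      · exact absurd h hq
end

section
/- For the Lie algebra g with basis X1,...,X_{2l+2k} and brackets [X_{2l+2i}, X_{2j-1}] = -X_{2j}, [X_{2l+2i}, X_{2j}] = X_{2j-1}, the linear map J defined by J X_{2j-1} = X_{2j}, J X_{2j} = -X_{2j-1} (1 ≤ j ≤ l) and J X_{2l+2i-1} = X_{2l+2i}, J X_{2l+2i} = -X_{2l+2i-1} (1 ≤ i ≤ k) is an integrable almost complex structure (vanishing Nijenhuis tensor). -/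
/-- For the Lie algebra `g` of Example 3 (basis indexed by
`(Fin l × Fin 2) ⊕ (Fin k × Fin 2)` with `inl (j,0) = X_{2j-1}`, `inl (j,1) = X_{2j}`,
`inr (i,0) = X_{2l+2i-1}`, `inr (i,1) = X_{2l+2i}`, and nonzero brackets
`⁅X_{2l+2i}, X_{2j-1}⁆ = -X_{2j}`, `⁅X_{2l+2i}, X_{2j}⁆ = X_{2j-1}`), the linear map
`J` with `J X_{2j-1} = X_{2j}`, `J X_{2j} = -X_{2j-1}`, `J X_{2l+2i-1} = X_{2l+2i}`,
`J X_{2l+2i} = -X_{2l+2i-1}` satisfies `J² = -id` and has vanishing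
Nijenhuis tensor. -/
theorem rigid_type_canonical_complex_structure_integrable
    (k l : ℕ) (hk : 1 ≤ k) (hl : 1 ≤ l)
    (g : Type*) [LieRing g] [LieAlgebra ℝ g] [Module.Finite ℝ g]
    (b : Module.Basis ((Fin l × Fin 2) ⊕ (Fin k × Fin 2)) ℝ g)
    (hnz1 : ∀ (i : Fin k) (j : Fin l),
      ⁅b (Sum.inr (i, 1)), b (Sum.inl (j, 0))⁆ = -(b (Sum.inl (j, 1))))
    (hnz2 : ∀ (i : Fin k) (j : Fin l),
      ⁅b (Sum.inr (i, 1)), b (Sum.inl (j, 1))⁆ = b (Sum.inl (j, 0)))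
    (hz1 : ∀ p q : Fin l × Fin 2, ⁅b (Sum.inl p), b (Sum.inl q)⁆ = 0)
    (hz2 : ∀ p q : Fin k × Fin 2, ⁅b (Sum.inr p), b (Sum.inr q)⁆ = 0)
    (hz3 : ∀ (i : Fin k) (p : Fin l × Fin 2),
      ⁅b (Sum.inr (i, 0)), b (Sum.inl p)⁆ = 0)
    (J : g →ₗ[ℝ] g)
    (hJ1 : ∀ j : Fin l, J (b (Sum.inl (j, 0))) = b (Sum.inl (j, 1)))
    (hJ2 : ∀ j : Fin l, J (b (Sum.inl (j, 1))) = -(b (Sum.inl (j, 0))))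
    (hJ3 : ∀ i : Fin k, J (b (Sum.inr (i, 0))) = b (Sum.inr (i, 1)))
    (hJ4 : ∀ i : Fin k, J (b (Sum.inr (i, 1))) = -(b (Sum.inr (i, 0)))) :
    (∀ X : g, J (J X) = -X) ∧
      ∀ X Y : g, ⁅J X, J Y⁆ - J ⁅J X, Y⁆ - J ⁅X, J Y⁆ - ⁅X, Y⁆ = 0 := by
  -- reversed bracket facts
  have hnz1' : ∀ (i : Fin k) (j : Fin l),
      ⁅b (Sum.inl (j, 0)), b (Sum.inr (i, 1))⁆ = b (Sum.inl (j, 1)) := by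
    intro i j
    rw [← lie_skew, hnz1, neg_neg]
  have hnz2' : ∀ (i : Fin k) (j : Fin l),
      ⁅b (Sum.inl (j, 1)), b (Sum.inr (i, 1))⁆ = -(b (Sum.inl (j, 0))) := by
    intro i j
    rw [← lie_skew, hnz2]
  have hz3' : ∀ (i : Fin k) (p : Fin l × Fin 2),
      ⁅b (Sum.inl p), b (Sum.inr (i, 0))⁆ = 0 := by
    intro i p
    rw [← lie_skew, hz3, neg_zero]
  -- part 1 : J ∘ J = -id
  have hJJ : J ∘ₗ J = -LinearMap.id := by
    apply b.ext
    rintro (⟨j, e⟩ | ⟨i, e⟩) <;> fin_cases e <;>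
      simp [hJ1, hJ2, hJ3, hJ4]
  have part1 : ∀ X : g, J (J X) = -X := by
    intro X
    have := LinearMap.congr_fun hJJ X
    simpa using this
  refine ⟨part1, ?_⟩
  -- bilinear Nijenhuis tensor
  let B : g →ₗ[ℝ] g →ₗ[ℝ] g :=
    LinearMap.mk₂ ℝ (fun X Y => ⁅X, Y⁆) add_lie smul_lie lie_add lie_smul
  let N : g →ₗ[ℝ] g →ₗ[ℝ] g :=
    B.compl₁₂ J J - (B.compl₁₂ J LinearMap.id).compr₂ J
      - (B.compl₁₂ LinearMap.id J).compr₂ J - B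
  have hNapp : ∀ X Y : g,
      N X Y = ⁅J X, J Y⁆ - J ⁅J X, Y⁆ - J ⁅X, J Y⁆ - ⁅X, Y⁆ := by
    intro X Y
    simp [N, B, LinearMap.sub_apply, LinearMap.compl₁₂_apply, LinearMap.compr₂_apply,
      LinearMap.mk₂_apply]
  have hN : N = 0 := by
    apply b.ext
    rintro (⟨j, e⟩ | ⟨i, e⟩) <;> fin_cases e <;>
    · apply b.ext
      rintro (⟨j', e'⟩ | ⟨i', e'⟩) <;> fin_cases e' <;>
        simp [hNapp, hJ1, hJ2, hJ3, hJ4, hnz1, hnz2, hnz1', hnz2', hz1, hz2, hz3, hz3']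
  intro X Y
  have := LinearMap.congr_fun (LinearMap.congr_fun hN X) Y
  rw [hNapp] at this
  simpa using this
end
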